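/- The flow of the vector field X⁴ is explicit: for every p = (p₁, p₂, p₃) ∈ ℂ³, the curve γ : ℝ → ℂ³ defined by γ(t) = (p₁ + (p₂ − 1)t, p₂, p₃ − (p₂ − 1)t² − 2p₁t) satisfies γ(0) = p and γ′(t) = X⁴(γ(t)) for all t ∈ ℝ. -/

import Mathlib

open Complex

noncomputable section

/-- The holomorphic vector field `X⁴ = (z₂ − 1, 0, −2z₁)` on `ℂ³`. -/
def X4 : ℂ × ℂ × ℂ → ℂ × ℂ × ℂ := fun p => (p.2.1 - 1, 0, -2 * p.1)

/-- The explicit flow of `X⁴`: through any `p ∈ ℂ³`, the curve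
`γ(t) = (p₁ + (p₂ − 1)t, p₂, p₃ − (p₂ − 1)t² − 2p₁t)` is an integral curve of `X⁴`. -/
theorem X4_flow (p : ℂ × ℂ × ℂ) (γ : ℝ → ℂ × ℂ × ℂ)
    (hγ : γ = fun t : ℝ =>
      (p.1 + (p.2.1 - 1) * (t : ℂ), p.2.1, p.2.2 - (p.2.1 - 1) * (t : ℂ) ^ 2 - 2 * p.1 * (t : ℂ))) :
    γ 0 = p ∧ ∀ t : ℝ, HasDerivAt γ (X4 (γ t)) t := by
  subst hγ
  refine ⟨by simp, fun t => ?_⟩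
  have hid : HasDerivAt (fun z : ℂ => z) 1 (t : ℂ) := hasDerivAt_id _
  have h1 : HasDerivAt (fun t : ℝ => p.1 + (p.2.1 - 1) * (t : ℂ)) (p.2.1 - 1) t := by
    have : HasDerivAt (fun z : ℂ => p.1 + (p.2.1 - 1) * z) (p.2.1 - 1) (t : ℂ) := by
      simpa using (hid.const_mul (p.2.1 - 1)).const_add p.1
    exact this.comp_ofReal
  have h2 : HasDerivAt (fun _ : ℝ => p.2.1) 0 t := hasDerivAt_const t _
  have h3 : HasDerivAt (fun t : ℝ => p.2.2 - (p.2.1 - 1) * (t : ℂ) ^ 2 - 2 * p.1 * (t : ℂ))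
      (-2 * (p.1 + (p.2.1 - 1) * (t : ℂ))) t := by
    have hz : HasDerivAt (fun z : ℂ => p.2.2 - (p.2.1 - 1) * z ^ 2 - 2 * p.1 * z)
        (-2 * (p.1 + (p.2.1 - 1) * (t : ℂ))) (t : ℂ) := by
      have h := (((hasDerivAt_pow 2 ((t : ℂ))).const_mul (p.2.1 - 1)).const_sub p.2.2).sub
        (hid.const_mul (2 * p.1))
      exact h.congr_deriv (by push_cast; ring)
    exact hz.comp_ofReal
  simpa [X4] using h1.prodMk (h2.prodMk h3)
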